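/- Suppose x_N = M. Then the partition function W_{M,N}, regarded as a function of v_M, satisfies the quasi-periodicities W_{M,N}(u₁,…,u_N|v₁,…,v_{M-1}, v_M + 2K₁/λ|x₁,…,x_N|a₁₂) = (-1)^N W_{M,N}(u₁,…,u_N|v₁,…,v_M|x₁,…,x_N|a₁₂) and W_{M,N}(u₁,…,u_N|v₁,…,v_{M-1}, v_M + 2iK₂/λ|x₁,…,x_N|a₁₂) = (-q^{-1})^N exp( -(iπλ/K₁)( N v_M − Σ_{j=1}^N u_j + a₁₂ + N + M − 2 ) ) W_{M,N}(u₁,…,u_N|v₁,…,v_M|x₁,…,x_N|a₁₂). Consequently, as a function of y_M = (λ/(2K₁)) v_M it is an elliptic polynomial in Θ_N(χ) with τ = iK₂/K₁, χ(1) = (-1)^N and χ(τ) = (-1)^N exp( (πλτ/K₂)( Σ_{j=1}^N u_j − a₁₂ − N − M + 2 ) ). -/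

import Mathlib

open Complex

noncomputable section

/-- The half period magnitude `K₁` for elliptic nome `q`. -/
def Kone (q : ℝ) : ℝ :=
  Real.pi / 2 * ∏' n : ℕ,
    ((1 + q ^ (2 * n + 1)) / (1 - q ^ (2 * n + 1)) *
      ((1 - q ^ (2 * n + 2)) / (1 + q ^ (2 * n + 2)))) ^ 2

/-- The half period magnitude `K₂` for elliptic nome `q`. -/
def Ktwo (q : ℝ) : ℝ := -(Kone q / Real.pi) * Real.log q

/-- The elliptic theta function `H`. -/
def theta (q : ℝ) (u : ℂ) : ℂ :=
  2 * (q : ℂ) ^ (1 / 4 : ℂ) * Complex.sin (Real.pi * u / (2 * (Kone q : ℂ))) *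
    ∏' n : ℕ,
      ((1 - 2 * (q : ℂ) ^ (2 * n + 2) * Complex.cos (Real.pi * u / (Kone q : ℂ)) +
          (q : ℂ) ^ (4 * n + 4)) * (1 - (q : ℂ) ^ (2 * n + 2)))

/-- The bracket `[u] = H(λu)`. -/
def brak (q : ℝ) (lam : ℂ) (u : ℂ) : ℂ := theta q (lam * u)

/-- Unit vector ê₁. -/
def e1 : ℤ × ℤ := (1, 0)

/-- Unit vector ê₂. -/
def e2 : ℤ × ℤ := (0, 1)

/-- The scalar `a₁₂ = a₁ + a₂ + ω₁₂` attached to a state vector. -/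
def aSc (ω12 : ℂ) (a : ℤ × ℤ) : ℂ := (a.1 : ℂ) + (a.2 : ℂ) + ω12

/-- The face weights of the Deguchi-Martin model. -/
def faceW (q : ℝ) (lam ω12 : ℂ) (a b c d : ℤ × ℤ) (u v : ℂ) : ℂ :=
  if b = a + e1 ∧ c = a + e1 ∧ d = a + e1 + e1 then
    brak q lam (1 + (u - v)) / brak q lam 1
  else if b = a + e2 ∧ c = a + e2 ∧ d = a + e2 + e2 then
    brak q lam (1 - (u - v)) / brak q lam 1
  else if b = a + e2 ∧ c = a + e1 ∧ d = a + e1 + e2 then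
    brak q lam (u - v) * brak q lam (aSc ω12 a - 1) / (brak q lam 1 * brak q lam (aSc ω12 a))
  else if b = a + e1 ∧ c = a + e2 ∧ d = a + e1 + e2 then
    brak q lam (u - v) * brak q lam (-aSc ω12 a - 1) / (brak q lam 1 * brak q lam (-aSc ω12 a))
  else if b = a + e1 ∧ c = a + e1 ∧ d = a + e1 + e2 then
    brak q lam (aSc ω12 a - (u - v)) / brak q lam (aSc ω12 a)
  else if b = a + e2 ∧ c = a + e2 ∧ d = a + e1 + e2 then
    brak q lam (-aSc ω12 a - (u - v)) / brak q lam (-aSc ω12 a)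
  else 0

/-- Number of the integers `x₁ < ⋯ < x_N` that are `≤ k`. -/
def btmCount (N : ℕ) (x : ℕ → ℕ) (k : ℕ) : ℕ :=
  ((Finset.Icc 1 N).filter fun j => x j ≤ k).card

open scoped Classical in
/-- The partition function `W_{M,N}(u₁,…,u_N|v₁,…,v_M|x₁,…,x_N|a₁₂)` of the
Deguchi-Martin model: the sum over all state-vector configurations of the
`N`-row, `M`-column lattice with the prescribed boundary of the product of all
`M·N` face weights. -/
def partW (q : ℝ) (lam ω12 : ℂ) (M N : ℕ) (u v : ℕ → ℂ) (x : ℕ → ℕ)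
    (a : ℤ × ℤ) : ℂ :=
  ∑' s : Fin (N + 1) × Fin (M + 1) → ℤ × ℤ,
    if (∀ k : Fin (M + 1), s (0, k) = a + ((k : ℕ) : ℤ) • e1) ∧
       (∀ i : Fin (N + 1), s (i, 0) = a + ((i : ℕ) : ℤ) • e1) ∧
       (∀ i : Fin (N + 1), s (i, Fin.last M) = a + (M : ℤ) • e1 + ((i : ℕ) : ℤ) • e2) ∧
       (∀ k : Fin (M + 1), s (Fin.last N, k) =
          a + ((N : ℤ) + ((k : ℕ) : ℤ) - (btmCount N x (k : ℕ) : ℤ)) • e1 +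
            (btmCount N x (k : ℕ) : ℤ) • e2)
    then
      ∏ i : Fin N, ∏ k : Fin M,
        faceW q lam ω12 (s (i.castSucc, k.castSucc)) (s (i.castSucc, k.succ))
          (s (i.succ, k.castSucc)) (s (i.succ, k.succ)) (u (N - (i : ℕ))) (v ((k : ℕ) + 1))
    else 0

set_option maxHeartbeats 1000000


lemma theta_eq_zero_of_Kone_eq_zero {q : ℝ} (hK : Kone q = 0) (u : ℂ) : theta q u = 0 := by
  simp [theta, hK]

lemma Kone_ne_zero_of_brak {q : ℝ} {lam : ℂ} (h : brak q lam 1 ≠ 0) : Kone q ≠ 0 := by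
  intro hK
  exact h (theta_eq_zero_of_Kone_eq_zero hK _)

lemma Ktwo_ne_zero {q : ℝ} (hq0 : 0 < q) (hq1 : q < 1) (hK : Kone q ≠ 0) : Ktwo q ≠ 0 := by
  unfold Ktwo
  have hl : Real.log q ≠ 0 := ne_of_lt (Real.log_neg hq0 hq1)
  have hpi : Real.pi ≠ 0 := Real.pi_ne_zero
  field_simp
  exact neg_ne_zero.mpr (div_ne_zero (mul_ne_zero hK hl) hpi)

lemma theta_add_two_Kone {q : ℝ} (hK : Kone q ≠ 0) (u : ℂ) :
    theta q (u + 2 * (Kone q : ℂ)) = - theta q u := by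
  have hKc : (Kone q : ℂ) ≠ 0 := by exact_mod_cast hK
  have h1 : (Real.pi : ℂ) * (u + 2 * (Kone q : ℂ)) / (2 * (Kone q : ℂ))
      = (Real.pi : ℂ) * u / (2 * (Kone q : ℂ)) + Real.pi := by
    field_simp
  have h2 : (Real.pi : ℂ) * (u + 2 * (Kone q : ℂ)) / ((Kone q : ℂ))
      = (Real.pi : ℂ) * u / ((Kone q : ℂ)) + 2 * Real.pi := by
    field_simp
  unfold theta
  rw [h1, h2]
  have hs : Complex.sin ((Real.pi : ℂ) * u / (2 * (Kone q : ℂ)) + Real.pi)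
      = - Complex.sin ((Real.pi : ℂ) * u / (2 * (Kone q : ℂ))) := by
    rw [Complex.sin_add, Complex.sin_pi, Complex.cos_pi]; ring
  have hc : Complex.cos ((Real.pi : ℂ) * u / ((Kone q : ℂ)) + 2 * Real.pi)
      = Complex.cos ((Real.pi : ℂ) * u / ((Kone q : ℂ))) := by
    rw [Complex.cos_add, Complex.cos_two_pi, Complex.sin_two_pi]; ring
  rw [hs, hc]; ring


lemma sin_exp_form (w : ℂ) : Complex.sin w = (Complex.exp (-w * I) - Complex.exp (w * I)) * I / 2 := by
  linear_combination (Complex.two_sin w) / 2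
lemma cos_exp_form (w : ℂ) : Complex.cos w = (Complex.exp (w * I) + Complex.exp (-w * I)) / 2 := by
  linear_combination (Complex.two_cos w) / 2

lemma multipliable_one_add {f : ℕ → ℂ} (hf : Summable f) :
    Multipliable (fun n => 1 + f n) := by
  obtain ⟨N, hN⟩ : ∃ N, ∀ n ≥ N, ‖f n‖ ≤ 1/2 := by
    have h0 := hf.tendsto_atTop_zero
    have := (Metric.tendsto_atTop.mp h0) (1/2) (by norm_num)
    obtain ⟨N, h⟩ := this
    exact ⟨N, fun n hn => by
      have := h n hn; rw [dist_eq_norm, sub_zero] at this; linarith⟩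
  apply Multipliable.comp_nat_add (k := N)
  have hnz : ∀ n : ℕ, (1 : ℂ) + f (n + N) ≠ 0 := by
    intro n h
    have h1 : ‖f (n + N)‖ ≤ 1/2 := hN _ (Nat.le_add_left _ _)
    have : f (n + N) = -1 := by linear_combination h
    rw [this] at h1; norm_num at h1
  have hsum : Summable (fun n => Complex.log (1 + f (n + N))) := by
    apply Summable.of_norm_bounded (g := fun n => 3/2 * ‖f (n + N)‖)
    · exact (((summable_nat_add_iff N).mpr hf.norm).mul_left _)
    · intro n
      exact Complex.norm_log_one_add_half_le_self (hN _ (Nat.le_add_left _ _))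
  exact Complex.multipliable_of_summable_log hsum

lemma multipliable_one_sub_cr (c r : ℂ) (hr : ‖r‖ < 1) :
    Multipliable (fun n : ℕ => 1 - c * r ^ n) := by
  have := multipliable_one_add (f := fun n => -(c * r ^ n))
    (((summable_geometric_of_norm_lt_one hr).mul_left c).neg)
  simpa [sub_eq_add_neg] using this

lemma theta_add_two_I_Ktwo {q : ℝ} (hq0 : 0 < q) (hq1 : q < 1) (hK : Kone q ≠ 0) (u : ℂ) :
    theta q (u + 2 * Complex.I * (Ktwo q : ℂ)) =
      -(q:ℂ)⁻¹ * Complex.exp (-(Complex.I * (Real.pi : ℂ) * u / (Kone q : ℂ))) * theta q u := by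
  have hq : (q:ℂ) ≠ 0 := by exact_mod_cast hq0.ne'
  have hKc : ((Kone q : ℝ) : ℂ) ≠ 0 := by exact_mod_cast hK
  unfold theta
  set K : ℂ := ((Kone q : ℝ) : ℂ) with hKdef
  set L : ℂ := ((Real.log q : ℝ) : ℂ) with hLdef
  set z : ℂ := (Real.pi : ℂ) * u / (2 * K) with hzdef
  set E : ℂ := Complex.exp (z * I) with hEdef
  have hE : E ≠ 0 := Complex.exp_ne_zero _
  have hEL : Complex.exp L = (q:ℂ) := by
    rw [hLdef, ← Complex.ofReal_exp, Real.exp_log hq0]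
  have hKL : (Real.pi : ℂ) * ((Ktwo q : ℝ) : ℂ) / K = -L := by
    have hr : Real.pi * Ktwo q / Kone q = -Real.log q := by
      rw [Ktwo]; field_simp
    have := congrArg (fun t : ℝ => (t : ℂ)) hr
    push_cast at this
    rw [hKdef, hLdef]; exact_mod_cast this
  have harg1 : (Real.pi : ℂ) * (u + 2 * Complex.I * ((Ktwo q : ℝ) : ℂ)) / (2 * K) = z - I * L := by
    have h : (Real.pi : ℂ) * (u + 2 * Complex.I * ((Ktwo q : ℝ) : ℂ)) / (2 * K)
        = z + I * ((Real.pi : ℂ) * ((Ktwo q : ℝ) : ℂ) / K) := by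
      rw [hzdef]; field_simp
    rw [h, hKL]; ring
  have h2z : (Real.pi : ℂ) * u / K = 2 * z := by
    rw [hzdef]; field_simp
  have harg2 : (Real.pi : ℂ) * (u + 2 * Complex.I * ((Ktwo q : ℝ) : ℂ)) / K = 2*z - 2*(I*L) := by
    have h : (Real.pi : ℂ) * (u + 2 * Complex.I * ((Ktwo q : ℝ) : ℂ)) / K
        = (Real.pi : ℂ) * u / K + 2*(I * ((Real.pi : ℂ) * ((Ktwo q : ℝ) : ℂ) / K)) := by
      field_simp
    rw [h, h2z, hKL]; ring
  have hEpow2 : Complex.exp (2*z*I) = E^2 := by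
    rw [show (2:ℂ)*z*I = z*I + z*I by ring, Complex.exp_add, hEdef]; ring
  have hexpzi : Complex.exp (z * I) = E := hEdef.symm
  have hsin0 : Complex.sin z = (E⁻¹ - E) * I / 2 := by
    rw [sin_exp_form, show -z*I = -(z*I) by ring, Complex.exp_neg, hexpzi]
  have hexp1 : Complex.exp ((z - I*L) * I) = E * (q:ℂ) := by
    rw [show (z - I*L)*I = z*I - I*I*L by ring, Complex.I_mul_I,
      show z*I - (-1)*L = z*I + L by ring, Complex.exp_add, hexpzi, hEL]
  have hsin1 : Complex.sin (z - I*L) = (E⁻¹ * (q:ℂ)⁻¹ - E * (q:ℂ)) * I / 2 := by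
    rw [sin_exp_form, show -(z - I*L)*I = -((z - I*L)*I) by ring, Complex.exp_neg, hexp1, mul_inv]
  have hcos0 : Complex.cos (2*z) = (E^2 + (E^2)⁻¹) / 2 := by
    rw [cos_exp_form, hEpow2, show -(2*z)*I = -(2*z*I) by ring, Complex.exp_neg, hEpow2]
  have hexp2 : Complex.exp ((2*z - 2*(I*L)) * I) = E^2 * (q:ℂ)^2 := by
    rw [show (2*z - 2*(I*L))*I = 2*z*I - 2*(I*I)*L by ring, Complex.I_mul_I,
      show 2*z*I - 2*(-1)*L = 2*z*I + (L + L) by ring, Complex.exp_add, hEpow2, Complex.exp_add, hEL]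
    ring
  have hcos1 : Complex.cos (2*z - 2*(I*L)) = (E^2 * (q:ℂ)^2 + (E^2)⁻¹ * ((q:ℂ)^2)⁻¹) / 2 := by
    rw [cos_exp_form, hexp2, show -(2*z - 2*(I*L))*I = -((2*z - 2*(I*L))*I) by ring,
      Complex.exp_neg, hexp2, mul_inv]
  set P : ℂ := (q:ℂ) with hPdef
  have hPn : ‖P^2‖ < 1 := by
    have h1 : ‖P‖ = q := by rw [hPdef, Complex.norm_real, Real.norm_eq_abs, abs_of_pos hq0]
    rw [norm_pow, h1]
    nlinarith
  have hsplit : ∀ (c1 c2 : ℂ), (∏' n:ℕ, ((1 - c1*(P^2)^n) * (1 - c2*(P^2)^n) * (1 - P^2*(P^2)^n)))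
      = (∏' n:ℕ, (1 - c1*(P^2)^n)) * (∏' n:ℕ, (1 - c2*(P^2)^n)) * (∏' n:ℕ, (1 - P^2*(P^2)^n)) := by
    intro c1 c2
    rw [Multipliable.tprod_mul ((multipliable_one_sub_cr _ _ hPn).mul (multipliable_one_sub_cr _ _ hPn))
      (multipliable_one_sub_cr _ _ hPn),
      Multipliable.tprod_mul (multipliable_one_sub_cr _ _ hPn) (multipliable_one_sub_cr _ _ hPn)]
  have horig : (∏' n:ℕ, ((1 - 2*P^(2*n+2)*((E^2 + (E^2)⁻¹) / 2) + P^(4*n+4)) * (1 - P^(2*n+2))))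
      = (∏' n:ℕ, (1 - (P^2*E^2)*(P^2)^n)) * (∏' n:ℕ, (1 - (P^2*(E^2)⁻¹)*(P^2)^n))
        * (∏' n:ℕ, (1 - P^2*(P^2)^n)) := by
    refine Eq.trans (tprod_congr fun n => ?_) (hsplit (P^2*E^2) (P^2*(E^2)⁻¹))
    have hp2 : P^(2*n+2) = P^2*(P^2)^n := by rw [pow_add, pow_mul]; ring
    have hp4 : P^(4*n+4) = (P^2*(P^2)^n)^2 := by
      rw [show 4*n+4 = (2*n+2)*2 by ring, pow_mul, hp2]
    rw [hp2, hp4]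
    field_simp
    ring
  have hshift : (∏' n:ℕ, ((1 - 2*P^(2*n+2)*((E^2 * P^2 + (E^2)⁻¹ * (P^2)⁻¹) / 2) + P^(4*n+4)) * (1 - P^(2*n+2))))
      = (∏' n:ℕ, (1 - (P^4*E^2)*(P^2)^n)) * (∏' n:ℕ, (1 - ((E^2)⁻¹)*(P^2)^n))
        * (∏' n:ℕ, (1 - P^2*(P^2)^n)) := by
    refine Eq.trans (tprod_congr fun n => ?_) (hsplit (P^4*E^2) ((E^2)⁻¹))
    have hp2 : P^(2*n+2) = P^2*(P^2)^n := by rw [pow_add, pow_mul]; ring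
    have hp4 : P^(4*n+4) = (P^2*(P^2)^n)^2 := by
      rw [show 4*n+4 = (2*n+2)*2 by ring, pow_mul, hp2]
    rw [hp2, hp4]
    field_simp
    ring
  have hFFfun : (fun n:ℕ => 1 - (P^2*E^2)*(P^2)^(n+1)) = (fun n:ℕ => 1 - (P^4*E^2)*(P^2)^n) := by
    funext n; rw [pow_succ]; ring
  have hFFshift : (∏' n:ℕ, (1 - (P^2*E^2)*(P^2)^n))
      = (1 - P^2*E^2) * ∏' n:ℕ, (1 - (P^4*E^2)*(P^2)^n) := by
    have hm : Multipliable (fun n:ℕ => 1 - (P^2*E^2)*(P^2)^(n+1)) := by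
      rw [hFFfun]; exact multipliable_one_sub_cr _ _ hPn
    rw [tprod_eq_zero_mul' (f := fun n:ℕ => 1 - (P^2*E^2)*(P^2)^n) hm]
    rw [show (∏' n:ℕ, (1 - (P^2*E^2)*(P^2)^(n+1))) = ∏' n:ℕ, (1 - (P^4*E^2)*(P^2)^n) from by rw [hFFfun]]
    norm_num
  have hGGfun : (fun n:ℕ => 1 - ((E^2)⁻¹)*(P^2)^(n+1)) = (fun n:ℕ => 1 - (P^2*(E^2)⁻¹)*(P^2)^n) := by
    funext n; rw [pow_succ]; ring
  have hGGshift : (∏' n:ℕ, (1 - ((E^2)⁻¹)*(P^2)^n))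
      = (1 - (E^2)⁻¹) * ∏' n:ℕ, (1 - (P^2*(E^2)⁻¹)*(P^2)^n) := by
    have hm : Multipliable (fun n:ℕ => 1 - ((E^2)⁻¹)*(P^2)^(n+1)) := by
      rw [hGGfun]; exact multipliable_one_sub_cr _ _ hPn
    rw [tprod_eq_zero_mul' (f := fun n:ℕ => 1 - ((E^2)⁻¹)*(P^2)^n) hm]
    rw [show (∏' n:ℕ, (1 - ((E^2)⁻¹)*(P^2)^(n+1))) = ∏' n:ℕ, (1 - (P^2*(E^2)⁻¹)*(P^2)^n) from by rw [hGGfun]]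
    norm_num
  have hexpmain : Complex.exp (-(Complex.I * (Real.pi : ℂ) * u / K)) = (E^2)⁻¹ := by
    have h : Complex.I * (Real.pi : ℂ) * u / K = 2*z*I := by
      rw [hzdef]; field_simp
    rw [h, Complex.exp_neg, hEpow2]
  rw [harg1, harg2, h2z, hsin1, hsin0, hcos1, hcos0, horig, hshift, hFFshift, hGGshift, hexpmain]
  field_simp
  ring


/-- the generic factor of the theta product -/
def gterm (q : ℝ) (n : ℕ) (u : ℂ) : ℂ :=
  (1 - 2 * (q : ℂ) ^ (2 * n + 2) * Complex.cos (Real.pi * u / (Kone q : ℂ)) +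
      (q : ℂ) ^ (4 * n + 4)) * (1 - (q : ℂ) ^ (2 * n + 2))

lemma theta_eq_gterm (q : ℝ) (u : ℂ) :
    theta q u = 2 * (q : ℂ) ^ (1 / 4 : ℂ) * Complex.sin (Real.pi * u / (2 * (Kone q : ℂ))) *
      ∏' n : ℕ, gterm q n u := rfl

lemma gterm_differentiable (q : ℝ) (n : ℕ) : Differentiable ℂ (gterm q n) := by
  unfold gterm
  have h1 : Differentiable ℂ (fun u : ℂ => (Real.pi : ℂ) * u / (Kone q : ℂ)) := by
    apply Differentiable.div_const
    exact differentiable_id.const_mul _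
  fun_prop

lemma gterm_sub_one_bound (q : ℝ) (hq0 : 0 < q) (hq1 : q < 1) (n : ℕ) (u : ℂ) :
    ‖gterm q n u - 1‖
      ≤ (4 * ‖Complex.cos (Real.pi * u / (Kone q : ℂ))‖ + 3) * q ^ (2 * n + 2) := by
  set A : ℂ := (q : ℂ) ^ (2 * n + 2) with hA
  set cv : ℂ := Complex.cos (Real.pi * u / (Kone q : ℂ)) with hcv
  have hA2 : (q:ℂ) ^ (4 * n + 4) = A ^ 2 := by
    rw [hA, ← pow_mul]
    congr 1
    ring
  have heq : gterm q n u - 1 = A * (A - 1 - A^2 - 2*cv + 2*A*cv) := by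
    unfold gterm
    rw [hA2]
    ring
  have hnA : ‖A‖ = q ^ (2*n+2) := by
    rw [hA, norm_pow, Complex.norm_real, Real.norm_eq_abs, abs_of_pos hq0]
  have hA1 : ‖A‖ ≤ 1 := by
    rw [hnA]
    exact pow_le_one₀ (le_of_lt hq0) (le_of_lt hq1)
  rw [heq, norm_mul, hnA, mul_comm]
  apply mul_le_mul_of_nonneg_right _ (pow_nonneg (le_of_lt hq0) _)
  have t1 : ‖A - 1 - A^2 - 2*cv + 2*A*cv‖ ≤ ‖A - 1 - A^2 - 2*cv‖ + ‖2*A*cv‖ := norm_add_le _ _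
  have t2 : ‖A - 1 - A^2 - 2*cv‖ ≤ ‖A - 1 - A^2‖ + ‖2*cv‖ := norm_sub_le _ _
  have t3 : ‖A - 1 - A^2‖ ≤ ‖A - 1‖ + ‖A^2‖ := norm_sub_le _ _
  have t4 : ‖A - 1‖ ≤ ‖A‖ + 1 := by
    calc ‖A - 1‖ ≤ ‖A‖ + ‖(1:ℂ)‖ := norm_sub_le _ _
    _ = ‖A‖ + 1 := by norm_num
  have t5 : ‖A^2‖ ≤ 1 := by
    rw [norm_pow]
    exact pow_le_one₀ (norm_nonneg _) hA1
  have t6 : ‖2*A*cv‖ ≤ 2*‖cv‖ := by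
    rw [norm_mul, norm_mul]
    have : ‖(2:ℂ)‖ = 2 := by norm_num
    rw [this]
    nlinarith [norm_nonneg cv, norm_nonneg A]
  have t7 : ‖2*cv‖ = 2*‖cv‖ := by
    rw [norm_mul]; norm_num
  nlinarith [norm_nonneg cv]

lemma summable_gterm_bound (q : ℝ) (hq0 : 0 < q) (hq1 : q < 1) (c : ℝ) :
    Summable (fun n : ℕ => c * q ^ (2 * n + 2)) := by
  have h : ∀ n : ℕ, c * q ^ (2*n+2) = (c * q^2) * (q^2)^n := by
    intro n
    rw [pow_add, pow_mul]
    ring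
  simp_rw [h]
  apply Summable.mul_left
  apply summable_geometric_of_lt_one (by positivity)
  nlinarith

lemma multipliable_gterm (q : ℝ) (hq0 : 0 < q) (hq1 : q < 1) (u : ℂ) :
    Multipliable (fun n => gterm q n u) := by
  have h := multipliable_one_add (f := fun n => gterm q n u - 1) ?_
  · have hfun : (fun n => 1 + (gterm q n u - 1)) = fun n => gterm q n u := by
      funext n; ring
    rwa [hfun] at h
  · apply Summable.of_norm_bounded
      (g := fun n => (4 * ‖Complex.cos (Real.pi * u / (Kone q : ℂ))‖ + 3) * q ^ (2 * n + 2))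
      (summable_gterm_bound q hq0 hq1 _)
    exact fun n => gterm_sub_one_bound q hq0 hq1 n u


lemma diff_finset_prod {ι : Type*} (f : ι → ℂ → ℂ) :
    ∀ (s : Finset ι), (∀ i ∈ s, Differentiable ℂ (f i)) →
      Differentiable ℂ (fun y => ∏ i ∈ s, f i y) := by
  intro s
  induction s using Finset.cons_induction with
  | empty =>
      intro _
      simp only [Finset.prod_empty]
      exact differentiable_const 1
  | cons a s ha ih =>
      intro hf
      simp only [Finset.prod_cons]
      exact (hf a (Finset.mem_cons_self a s)).mul
        (ih (fun i hi => hf i (Finset.mem_cons_of_mem hi)))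

lemma differentiable_theta (q : ℝ) (hq0 : 0 < q) (hq1 : q < 1) :
    Differentiable ℂ (theta q) := by
  have hGdiff : Differentiable ℂ (fun u => ∏' n : ℕ, gterm q n u) := by
    intro u₀
    -- bound on cos on the closed ball of radius 1
    obtain ⟨C, hC⟩ : ∃ C, ∀ u ∈ Metric.closedBall u₀ 1,
        ‖Complex.cos (Real.pi * u / (Kone q : ℂ))‖ ≤ C := by
      obtain ⟨C, hC⟩ := (isCompact_closedBall u₀ 1).exists_bound_of_continuousOn
        (Continuous.continuousOn (by fun_prop) :
          ContinuousOn (fun u : ℂ => Complex.cos (Real.pi * u / (Kone q : ℂ))) _)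
      exact ⟨C, hC⟩
    have hC0 : 0 ≤ C := le_trans (norm_nonneg _) (hC u₀ (Metric.mem_closedBall_self zero_le_one))
    -- choose a tail index where factors stay close to 1 on the ball
    obtain ⟨Nc, hNc⟩ : ∃ Nc : ℕ, ∀ n ≥ Nc, (4 * C + 3) * q ^ (2 * n + 2) ≤ 1 / 2 := by
      have htend : Filter.Tendsto (fun n : ℕ => (4 * C + 3) * q ^ (2 * n + 2))
          Filter.atTop (nhds 0) := by
        have := (summable_gterm_bound q hq0 hq1 (4 * C + 3)).tendsto_atTop_zero
        exact this
      have hev := htend.eventually_le_const (by norm_num : (0:ℝ) < 1/2)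
      obtain ⟨Nc, hNc⟩ := Filter.eventually_atTop.mp hev
      exact ⟨Nc, hNc⟩
    set D := Metric.ball u₀ (1:ℝ) with hD
    have hDo : IsOpen D := Metric.isOpen_ball
    have hDu : D ∈ nhds u₀ := hDo.mem_nhds (Metric.mem_ball_self one_pos)
    have hbnd : ∀ n : ℕ, ∀ u ∈ Metric.closedBall u₀ 1,
        ‖gterm q (n + Nc) u - 1‖ ≤ (4*C+3) * q ^ (2*(n+Nc)+2) := by
      intro n u hu
      refine le_trans (gterm_sub_one_bound q hq0 hq1 _ u) ?_
      apply mul_le_mul_of_nonneg_right _ (pow_nonneg hq0.le _)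
      have := hC u hu
      nlinarith [norm_nonneg (Complex.cos (Real.pi * u / (Kone q : ℂ)))]
    have hhalf : ∀ n : ℕ, ∀ u ∈ Metric.closedBall u₀ 1, ‖gterm q (n + Nc) u - 1‖ ≤ 1/2 :=
      fun n u hu => le_trans (hbnd n u hu) (hNc (n+Nc) (Nat.le_add_left _ _))
    have hne : ∀ n : ℕ, ∀ u ∈ Metric.closedBall u₀ 1, gterm q (n + Nc) u ≠ 0 := by
      intro n u hu h0
      have h := hhalf n u hu
      rw [h0] at h
      norm_num at h
    have hlogb : ∀ n : ℕ, ∀ u ∈ Metric.closedBall u₀ 1,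
        ‖Complex.log (gterm q (n + Nc) u)‖ ≤ 3/2 * ((4*C+3) * q ^ (2*(n+Nc)+2)) := by
      intro n u hu
      have h1 : gterm q (n+Nc) u = 1 + (gterm q (n+Nc) u - 1) := by ring
      rw [h1]
      refine le_trans (Complex.norm_log_one_add_half_le_self (hhalf n u hu)) ?_
      have := hbnd n u hu
      linarith
    have hsummb : Summable (fun n : ℕ => 3/2 * ((4*C+3) * q ^ (2*(n+Nc)+2))) := by
      have hform : ∀ n : ℕ, (3/2*(4*C+3)*q^(2*Nc)) * q ^ (2*n+2)
          = 3/2 * ((4*C+3) * q ^ (2*(n+Nc)+2)) := by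
        intro n
        rw [show 2*(n+Nc)+2 = (2*n+2) + 2*Nc by ring, pow_add]
        ring
      exact (summable_gterm_bound q hq0 hq1 (3/2*(4*C+3)*q^(2*Nc))).congr hform
    have hlogsum : ∀ u ∈ Metric.closedBall u₀ 1,
        Summable (fun n => Complex.log (gterm q (n+Nc) u)) := by
      intro u hu
      exact Summable.of_norm_bounded hsummb (fun n => hlogb n u hu)
    have hTU : TendstoUniformlyOn
        (fun (m:ℕ) u => ∑ n ∈ Finset.range m, Complex.log (gterm q (n+Nc) u))
        (fun u => ∑' n, Complex.log (gterm q (n+Nc) u)) Filter.atTop D := by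
      apply tendstoUniformlyOn_tsum_nat hsummb
      intro n u hu
      exact hlogb n u (Metric.ball_subset_closedBall hu)
    have hdiffsum : DifferentiableOn ℂ
        (fun u => ∑' n, Complex.log (gterm q (n+Nc) u)) D := by
      apply hTU.tendstoLocallyUniformlyOn.differentiableOn ?_ hDo
      apply Filter.Eventually.of_forall
      intro m
      apply DifferentiableOn.fun_sum
      intro n _
      intro u hu
      apply DifferentiableAt.differentiableWithinAt
      apply DifferentiableAt.clog ((gterm_differentiable q (n+Nc)) u)
      have h1 : |(gterm q (n+Nc) u - 1).re| ≤ 1/2 := by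
        refine le_trans (Complex.abs_re_le_norm _) ?_
        simpa using hhalf n u (Metric.ball_subset_closedBall hu)
      apply Complex.mem_slitPlane_iff.mpr
      left
      have h2 : (gterm q (n+Nc) u).re = (gterm q (n+Nc) u - 1).re + 1 := by
        simp [Complex.sub_re]
      rw [h2]
      rcases abs_le.mp h1 with ⟨hl, hr⟩
      linarith
    have htail : ∀ u ∈ Metric.closedBall u₀ 1,
        (∏' n, gterm q (n+Nc) u) = Complex.exp (∑' n, Complex.log (gterm q (n+Nc) u)) := by
      intro u hu
      have h := Complex.cexp_tsum_eq_tprod (f := fun n => gterm q (n+Nc) u)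
        (fun n => hne n u hu) (hlogsum u hu)
      exact h.symm
    have hsplitP : ∀ u : ℂ, (∏' n, gterm q n u)
        = (∏ n ∈ Finset.range Nc, gterm q n u) * ∏' n, gterm q (n+Nc) u := by
      intro u
      have hsf : Summable (fun n => gterm q n u - 1) := by
        apply Summable.of_norm_bounded
          (g := fun n => (4 * ‖Complex.cos (Real.pi * u / (Kone q : ℂ))‖ + 3) * q ^ (2 * n + 2))
          (summable_gterm_bound q hq0 hq1 _)
        exact fun n => gterm_sub_one_bound q hq0 hq1 n u
      have hmt : Multipliable (fun n => gterm q (n+Nc) u) := by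
        have h := multipliable_one_add (f := fun n => gterm q (n+Nc) u - 1)
          ((summable_nat_add_iff Nc).mpr hsf)
        have hfun : (fun n => 1 + (gterm q (n+Nc) u - 1)) = fun n => gterm q (n+Nc) u := by
          funext n; ring
        rwa [hfun] at h
      exact (hmt.prod_mul_tprod_nat_mul').symm
    have hfin : Differentiable ℂ (fun u => ∏ n ∈ Finset.range Nc, gterm q n u) :=
      diff_finset_prod _ _ (fun i _ => gterm_differentiable q i)
    have hD2 : DifferentiableAt ℂ (fun u => (∏ n ∈ Finset.range Nc, gterm q n u)
        * Complex.exp (∑' n, Complex.log (gterm q (n+Nc) u))) u₀ := by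
      apply DifferentiableAt.mul (hfin u₀)
      exact (hdiffsum.cexp).differentiableAt hDu
    apply hD2.congr_of_eventuallyEq
    apply Filter.eventuallyEq_of_mem hDu
    intro u hu
    dsimp only
    rw [hsplitP u, htail u (Metric.ball_subset_closedBall hu)]
  rw [funext (theta_eq_gterm q)]
  apply Differentiable.mul
  · apply Differentiable.mul (differentiable_const _)
    apply Complex.differentiable_sin.comp
    apply Differentiable.div_const
    exact differentiable_id.const_mul _
  · exact hGdiff


/-- the quasi-periodicity factor -/
def qpFac (q : ℝ) (lam : ℂ) (s : ℂ) : ℂ :=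
  -(q:ℂ)⁻¹ * Complex.exp (-(Complex.I * (Real.pi:ℂ) * lam / (Kone q:ℂ)) * s)

section braksec
variable {q : ℝ} {lam : ℂ}

lemma brak_shift1 (hK : Kone q ≠ 0) (hlam : lam ≠ 0) (s : ℂ) :
    brak q lam (s + 2 * (Kone q:ℂ) / lam) = - brak q lam s := by
  unfold brak
  rw [show lam * (s + 2 * (Kone q:ℂ) / lam) = lam * s + 2 * (Kone q:ℂ) by field_simp,
    theta_add_two_Kone hK]

lemma brak_shift1' (hK : Kone q ≠ 0) (hlam : lam ≠ 0) (s : ℂ) :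
    brak q lam (s - 2 * (Kone q:ℂ) / lam) = - brak q lam s := by
  have h := brak_shift1 hK hlam (s - 2 * (Kone q:ℂ) / lam)
  rw [show s - 2 * (Kone q:ℂ) / lam + 2 * (Kone q:ℂ) / lam = s by ring] at h
  linear_combination h

lemma brak_shift2 (hq0 : 0 < q) (hq1 : q < 1) (hK : Kone q ≠ 0) (hlam : lam ≠ 0) (s : ℂ) :
    brak q lam (s + 2 * Complex.I * (Ktwo q:ℂ) / lam) = qpFac q lam s * brak q lam s := by
  unfold brak qpFac
  rw [show lam * (s + 2 * Complex.I * (Ktwo q:ℂ) / lam) = lam * s + 2 * Complex.I * (Ktwo q:ℂ)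
      by field_simp,
    theta_add_two_I_Ktwo hq0 hq1 hK,
    show -(Complex.I * (Real.pi:ℂ) * (lam * s) / (Kone q:ℂ))
      = -(Complex.I * (Real.pi:ℂ) * lam / (Kone q:ℂ)) * s by ring]

lemma brak_shift2' (hq0 : 0 < q) (hq1 : q < 1) (hK : Kone q ≠ 0) (hlam : lam ≠ 0) (s : ℂ) :
    brak q lam (s - 2 * Complex.I * (Ktwo q:ℂ) / lam) = qpFac q lam (-s) * brak q lam s := by
  have h := brak_shift2 hq0 hq1 hK hlam (s - 2 * Complex.I * (Ktwo q:ℂ) / lam)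
  rw [show s - 2 * Complex.I * (Ktwo q:ℂ) / lam + 2 * Complex.I * (Ktwo q:ℂ) / lam = s by ring]
    at h
  -- h : brak s = qpFac (s - σ) * brak (s - σ); multiply both sides by qpFac (-s)
  have hco : qpFac q lam (-s) * qpFac q lam (s - 2 * Complex.I * (Ktwo q:ℂ) / lam) = 1 := by
    unfold qpFac
    have hKc : ((Kone q : ℝ) : ℂ) ≠ 0 := by exact_mod_cast hK
    have hqc : ((q : ℝ) : ℂ) ≠ 0 := by exact_mod_cast hq0.ne'
    have hKL : (Real.pi : ℂ) * ((Ktwo q : ℝ) : ℂ) / (Kone q:ℂ) = -((Real.log q : ℝ) : ℂ) := by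
      have hr : Real.pi * Ktwo q / Kone q = -Real.log q := by
        rw [Ktwo]; field_simp
      have h2 := congrArg (fun t : ℝ => (t : ℂ)) hr
      push_cast at h2
      exact_mod_cast h2
    have harg : -(Complex.I * (Real.pi:ℂ) * lam / (Kone q:ℂ)) * (-s)
        + -(Complex.I * (Real.pi:ℂ) * lam / (Kone q:ℂ)) * (s - 2 * Complex.I * (Ktwo q:ℂ) / lam)
        = -2 * ((Real.pi:ℂ) * ((Ktwo q : ℝ) : ℂ) / (Kone q:ℂ)) := by
      field_simp
      linear_combination (2 * ((Ktwo q : ℝ) : ℂ)) * Complex.I_sq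
    rw [mul_mul_mul_comm, ← Complex.exp_add, harg, hKL]
    rw [show (-2:ℂ) * -((Real.log q : ℝ) : ℂ) = ((Real.log q : ℝ) : ℂ) + ((Real.log q : ℝ) : ℂ) by ring,
      Complex.exp_add]
    have hEL : Complex.exp ((Real.log q : ℝ) : ℂ) = (q:ℂ) := by
      rw [← Complex.ofReal_exp, Real.exp_log hq0]
    rw [hEL]
    field_simp
  calc brak q lam (s - 2 * Complex.I * (Ktwo q:ℂ) / lam)
      = (qpFac q lam (-s) * qpFac q lam (s - 2 * Complex.I * (Ktwo q:ℂ) / lam))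
          * brak q lam (s - 2 * Complex.I * (Ktwo q:ℂ) / lam) := by rw [hco, one_mul]
    _ = qpFac q lam (-s) * brak q lam s := by rw [h]; ring

end braksec

lemma prod_qpFac (q : ℝ) (lam : ℂ) (n : ℕ) (f : ℕ → ℂ) :
    ∏ i ∈ Finset.range n, qpFac q lam (f i)
      = (-(q:ℂ)⁻¹)^n * Complex.exp (-(Complex.I * (Real.pi:ℂ) * lam / (Kone q:ℂ))
          * ∑ i ∈ Finset.range n, f i) := by
  induction n with
  | zero => simp
  | succ n ih =>
      rw [Finset.prod_range_succ, ih, Finset.sum_range_succ, mul_add, Complex.exp_add, qpFac,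
        pow_succ]
      ring

section face
variable {q : ℝ} {lam : ℂ} (ω12 : ℂ)

lemma faceW_qp1 (hK : Kone q ≠ 0) (hlam : lam ≠ 0) (a b c d : ℤ×ℤ) (hd : d = b + e2)
    (U t : ℂ) :
    faceW q lam ω12 a b c d U (t + 2 * (Kone q:ℂ) / lam)
      = - faceW q lam ω12 a b c d U t := by
  unfold faceW
  split_ifs with h1 h2 h3 h4 h5 h6
  · exfalso
    obtain ⟨hb, -, hdd⟩ := h1
    rw [hb] at hd; rw [hdd] at hd
    simp [e1, e2, Prod.ext_iff] at hd
  · rw [show (1:ℂ) - (U - (t + 2 * (Kone q:ℂ) / lam)) = (1 - (U - t)) + 2 * (Kone q:ℂ) / lam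
      by ring, brak_shift1 hK hlam, neg_div]
  · exfalso
    obtain ⟨hb, -, hdd⟩ := h3
    rw [hb] at hd; rw [hdd] at hd
    simp [e1, e2, Prod.ext_iff] at hd
  · rw [show U - (t + 2 * (Kone q:ℂ) / lam) = (U - t) - 2 * (Kone q:ℂ) / lam by ring,
      brak_shift1' hK hlam]
    ring
  · rw [show aSc ω12 a - (U - (t + 2 * (Kone q:ℂ) / lam))
        = (aSc ω12 a - (U - t)) + 2 * (Kone q:ℂ) / lam by ring, brak_shift1 hK hlam, neg_div]
  · exfalso
    obtain ⟨hb, -, hdd⟩ := h6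
    rw [hb] at hd; rw [hdd] at hd
    simp [e1, e2, Prod.ext_iff] at hd
  · rw [neg_zero]

lemma faceW_red2 (a : ℤ×ℤ) (U w : ℂ) :
    faceW q lam ω12 a (a + e2) (a + e2) (a + e2 + e2) U w
      = brak q lam (1 - (U - w)) / brak q lam 1 := by
  unfold faceW
  rw [if_neg (fun h => by simp [e1, e2, Prod.ext_iff] at h), if_pos ⟨rfl, rfl, rfl⟩]

lemma faceW_red4 (a : ℤ×ℤ) (U w : ℂ) :
    faceW q lam ω12 a (a + e1) (a + e2) (a + e1 + e2) U w
      = brak q lam (U - w) * brak q lam (-aSc ω12 a - 1)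
        / (brak q lam 1 * brak q lam (-aSc ω12 a)) := by
  unfold faceW
  rw [if_neg (fun h => by simp [e1, e2, Prod.ext_iff] at h),
    if_neg (fun h => by simp [e1, e2, Prod.ext_iff] at h),
    if_neg (fun h => by simp [e1, e2, Prod.ext_iff] at h), if_pos ⟨rfl, rfl, rfl⟩]

lemma faceW_red5 (a : ℤ×ℤ) (U w : ℂ) :
    faceW q lam ω12 a (a + e1) (a + e1) (a + e1 + e2) U w
      = brak q lam (aSc ω12 a - (U - w)) / brak q lam (aSc ω12 a) := by
  unfold faceW
  rw [if_neg (fun h => by simp [e1, e2, Prod.ext_iff] at h),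
    if_neg (fun h => by simp [e1, e2, Prod.ext_iff] at h),
    if_neg (fun h => by simp [e1, e2, Prod.ext_iff] at h),
    if_neg (fun h => by simp [e1, e2, Prod.ext_iff] at h), if_pos ⟨rfl, rfl, rfl⟩]

lemma faceW_qp2_br2 (hq0 : 0 < q) (hq1 : q < 1) (hK : Kone q ≠ 0) (hlam : lam ≠ 0)
    (a b c d : ℤ×ℤ) (hb : b = a + e2) (hc : c = a + e2) (hdd : d = a + e2 + e2) (U t : ℂ) :
    faceW q lam ω12 a b c d U (t + 2 * Complex.I * (Ktwo q:ℂ) / lam)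
      = qpFac q lam (1 - (U - t)) * faceW q lam ω12 a b c d U t := by
  subst hb hc hdd
  rw [faceW_red2, faceW_red2]
  rw [show (1:ℂ) - (U - (t + 2 * Complex.I * (Ktwo q:ℂ) / lam))
      = (1 - (U - t)) + 2 * Complex.I * (Ktwo q:ℂ) / lam by ring,
    brak_shift2 hq0 hq1 hK hlam, mul_div_assoc]

lemma faceW_qp2_br4 (hq0 : 0 < q) (hq1 : q < 1) (hK : Kone q ≠ 0) (hlam : lam ≠ 0)
    (a b c d : ℤ×ℤ) (hb : b = a + e1) (hc : c = a + e2) (hdd : d = a + e1 + e2) (U t : ℂ) :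
    faceW q lam ω12 a b c d U (t + 2 * Complex.I * (Ktwo q:ℂ) / lam)
      = qpFac q lam (-(U - t)) * faceW q lam ω12 a b c d U t := by
  subst hb hc hdd
  rw [faceW_red4, faceW_red4]
  rw [show U - (t + 2 * Complex.I * (Ktwo q:ℂ) / lam)
      = (U - t) - 2 * Complex.I * (Ktwo q:ℂ) / lam by ring,
    brak_shift2' hq0 hq1 hK hlam]
  ring

lemma faceW_qp2_br5 (hq0 : 0 < q) (hq1 : q < 1) (hK : Kone q ≠ 0) (hlam : lam ≠ 0)
    (a b c d : ℤ×ℤ) (hb : b = a + e1) (hc : c = a + e1) (hdd : d = a + e1 + e2) (U t : ℂ) :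
    faceW q lam ω12 a b c d U (t + 2 * Complex.I * (Ktwo q:ℂ) / lam)
      = qpFac q lam (aSc ω12 a - (U - t)) * faceW q lam ω12 a b c d U t := by
  subst hb hc hdd
  rw [faceW_red5, faceW_red5]
  rw [show aSc ω12 a - (U - (t + 2 * Complex.I * (Ktwo q:ℂ) / lam))
      = (aSc ω12 a - (U - t)) + 2 * Complex.I * (Ktwo q:ℂ) / lam by ring,
    brak_shift2 hq0 hq1 hK hlam, mul_div_assoc]

lemma faceW_qp2_zero (a b c d : ℤ×ℤ) (hd : d = b + e2)
    (hng : ¬ ((b = a + e2 ∧ c = a + e2 ∧ d = a + e2 + e2)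
      ∨ (b = a + e1 ∧ c = a + e2 ∧ d = a + e1 + e2)
      ∨ (b = a + e1 ∧ c = a + e1 ∧ d = a + e1 + e2))) (U t : ℂ) :
    faceW q lam ω12 a b c d U t = 0 := by
  unfold faceW
  split_ifs with h1 h2 h3 h4 h5 h6
  · exfalso; obtain ⟨hb, -, hdd⟩ := h1; rw [hb] at hd; rw [hdd] at hd
    simp [e1, e2, Prod.ext_iff] at hd
  · exact absurd (Or.inl h2) hng
  · exfalso; obtain ⟨hb, -, hdd⟩ := h3; rw [hb] at hd; rw [hdd] at hd
    simp [e1, e2, Prod.ext_iff] at hd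
  · exact absurd (Or.inr (Or.inl h4)) hng
  · exact absurd (Or.inr (Or.inr h5)) hng
  · exfalso; obtain ⟨hb, -, hdd⟩ := h6; rw [hb] at hd; rw [hdd] at hd
    simp [e1, e2, Prod.ext_iff] at hd
  · rfl

lemma faceW_branch_of_ne_zero (a b c d : ℤ×ℤ) (U t : ℂ)
    (h : faceW q lam ω12 a b c d U t ≠ 0) : c = a + e1 ∨ c = a + e2 := by
  unfold faceW at h
  split_ifs at h with h1 h2 h3 h4 h5 h6
  · exact Or.inl h1.2.1
  · exact Or.inr h2.2.1
  · exact Or.inl h3.2.1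
  · exact Or.inr h4.2.1
  · exact Or.inl h5.2.1
  · exact Or.inr h6.2.1
  · exact absurd rfl h

end face

section pw
variable {q : ℝ} {lam : ℂ}

theorem partW_qp1 (hq0 : 0 < q) (hq1 : q < 1) (hlam : lam ≠ 0) (hK : Kone q ≠ 0)
    (ω12 : ℂ) (M N : ℕ) (hN : 1 ≤ N) (hNM : N ≤ M) (u : ℕ → ℂ) (x : ℕ → ℕ) (a : ℤ × ℤ)
    (v : ℕ → ℂ) :
    partW q lam ω12 M N u (Function.update v M (v M + 2 * (Kone q : ℂ) / lam)) x a
      = (-1 : ℂ) ^ N * partW q lam ω12 M N u v x a := by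
  classical
  have hM1 : 0 < M := lt_of_lt_of_le hN hNM
  unfold partW
  rw [← tsum_mul_left]
  apply tsum_congr
  intro s
  split_ifs with hcnd
  · obtain ⟨htop, hleft, hright, hbot⟩ := hcnd
    set kl : Fin M := ⟨M - 1, by omega⟩ with hkl
    have hklval : ((kl : ℕ) + 1) = M := by simp [hkl]; omega
    have hklsucc : kl.succ = Fin.last M := by
      apply Fin.ext; simp [hkl]; omega
    have hrow : ∀ i : Fin N,
        (∏ k : Fin M, faceW q lam ω12 (s (i.castSucc, k.castSucc)) (s (i.castSucc, k.succ))
          (s (i.succ, k.castSucc)) (s (i.succ, k.succ)) (u (N - (i : ℕ)))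
          ((Function.update v M (v M + 2 * (Kone q : ℂ) / lam)) ((k : ℕ) + 1)))
        = -1 * (∏ k : Fin M, faceW q lam ω12 (s (i.castSucc, k.castSucc)) (s (i.castSucc, k.succ))
          (s (i.succ, k.castSucc)) (s (i.succ, k.succ)) (u (N - (i : ℕ))) (v ((k : ℕ) + 1))) := by
      intro i
      rw [← Finset.mul_prod_erase _ _ (Finset.mem_univ kl),
        ← Finset.mul_prod_erase _ (fun k : Fin M => faceW q lam ω12 (s (i.castSucc, k.castSucc))
          (s (i.castSucc, k.succ)) (s (i.succ, k.castSucc)) (s (i.succ, k.succ))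
          (u (N - (i : ℕ))) (v ((k : ℕ) + 1))) (Finset.mem_univ kl)]
      have herase : (∏ k ∈ Finset.univ.erase kl, faceW q lam ω12 (s (i.castSucc, k.castSucc))
            (s (i.castSucc, k.succ)) (s (i.succ, k.castSucc)) (s (i.succ, k.succ))
            (u (N - (i : ℕ)))
            ((Function.update v M (v M + 2 * (Kone q : ℂ) / lam)) ((k : ℕ) + 1)))
          = ∏ k ∈ Finset.univ.erase kl, faceW q lam ω12 (s (i.castSucc, k.castSucc))
            (s (i.castSucc, k.succ)) (s (i.succ, k.castSucc)) (s (i.succ, k.succ))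
            (u (N - (i : ℕ))) (v ((k : ℕ) + 1)) := by
        apply Finset.prod_congr rfl
        intro k hk
        have hkne : (k : ℕ) + 1 ≠ M := by
          have h1 : k ≠ kl := (Finset.mem_erase.mp hk).1
          have h2 : (k : ℕ) ≠ M - 1 := fun h => h1 (Fin.ext (by simp [hkl, h]))
          have := k.isLt
          omega
        rw [Function.update_of_ne hkne]
      rw [herase, hklval, Function.update_self]
      have hd : s (i.succ, kl.succ) = s (i.castSucc, kl.succ) + e2 := by
        rw [hklsucc, hright i.succ, hright i.castSucc]
        rw [Fin.val_succ, Fin.coe_castSucc]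
        rw [show (((i : ℕ) + 1 : ℕ) : ℤ) = ((i : ℕ) : ℤ) + 1 by push_cast; ring, add_smul,
          one_smul, ← add_assoc]
      rw [faceW_qp1 ω12 hK hlam _ _ _ _ hd]
      ring
    rw [Finset.prod_congr rfl (fun i _ => hrow i), Finset.prod_mul_distrib,
      Finset.prod_const, Finset.card_univ, Fintype.card_fin]
  · ring
end pw

theorem btmCount_pred (N M : ℕ) (x : ℕ → ℕ) (hN : 1 ≤ N) (hM : 1 ≤ M)
    (hxmono : ∀ j k, 1 ≤ j → j < k → k ≤ N → x j < x k) (hxN : x N = M) :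
    btmCount N x (M - 1) = N - 1 := by
  unfold btmCount
  have hset : (Finset.Icc 1 N).filter (fun j => x j ≤ M - 1) = Finset.Icc 1 (N - 1) := by
    apply Finset.ext; intro j
    simp only [Finset.mem_filter, Finset.mem_Icc]
    constructor
    · rintro ⟨⟨h1, h2⟩, h3⟩
      refine ⟨h1, ?_⟩
      by_contra hc
      have hj : j = N := by omega
      subst hj
      rw [hxN] at h3; omega
    · rintro ⟨h1, h2⟩
      have hjN : j < N := by omega
      have := hxmono j N h1 hjN le_rfl
      rw [hxN] at this
      exact ⟨⟨h1, by omega⟩, by omega⟩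
  rw [hset, Nat.card_Icc]
  omega

section pw2
variable {q : ℝ} {lam : ℂ}

theorem partW_qp2 (hq0 : 0 < q) (hq1 : q < 1) (hlam : lam ≠ 0) (hK : Kone q ≠ 0)
    (ω12 : ℂ) (M N : ℕ) (hN : 1 ≤ N) (hNM : N ≤ M) (u : ℕ → ℂ) (x : ℕ → ℕ)
    (hxmono : ∀ j k, 1 ≤ j → j < k → k ≤ N → x j < x k) (hxN : x N = M) (a : ℤ × ℤ)
    (v : ℕ → ℂ) :
    partW q lam ω12 M N u (Function.update v M (v M + 2 * Complex.I * (Ktwo q : ℂ) / lam)) x a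
      = (-(q:ℂ)⁻¹) ^ N * Complex.exp (-(Complex.I * (Real.pi:ℂ) * lam / (Kone q:ℂ)) *
          ((N:ℂ) * v M - (∑ j ∈ Finset.Icc 1 N, u j) + aSc ω12 a + (N:ℂ) + (M:ℂ) - 2))
        * partW q lam ω12 M N u v x a := by
  classical
  have hM1 : 0 < M := lt_of_lt_of_le hN hNM
  unfold partW
  rw [← tsum_mul_left]
  apply tsum_congr
  intro s
  split_ifs with hcnd
  case neg => ring
  obtain ⟨htop, hleft, hright, hbot⟩ := hcnd
  set kl : Fin M := ⟨M - 1, by omega⟩ with hkl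
  have hklval : ((kl : ℕ) + 1) = M := by simp [hkl]; omega
  have hklcs : ((kl.castSucc : Fin (M+1)) : ℕ) = M - 1 := by simp [hkl]
  have hklsucc : kl.succ = Fin.last M := by apply Fin.ext; simp [hkl]; omega
  set row : ℕ → Fin (N + 1) := fun i => ⟨min i N, by omega⟩ with hrowdef
  set SS : ℕ → ℤ × ℤ := fun i => s (row i, kl.castSucc) with hSSdef
  set BB : ℕ → ℤ × ℤ := fun i => s (row i, Fin.last M) with hBBdef
  set fwS : ℕ → ℂ := fun i => faceW q lam ω12 (SS i) (BB i) (SS (i+1)) (BB (i+1))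
      (u (N - i)) (v M + 2 * Complex.I * (Ktwo q : ℂ) / lam) with hfwSdef
  set fw : ℕ → ℂ := fun i => faceW q lam ω12 (SS i) (BB i) (SS (i+1)) (BB (i+1))
      (u (N - i)) (v M) with hfwdef
  have hrowlt : ∀ i : Fin N, row (i : ℕ) = i.castSucc := by
    intro i; have hi := i.isLt
    apply Fin.ext; simp only [hrowdef, Fin.coe_castSucc]; omega
  have hrowssucc : ∀ i : Fin N, row ((i : ℕ) + 1) = i.succ := by
    intro i; have hi := i.isLt
    apply Fin.ext; simp only [hrowdef, Fin.val_succ]; omega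
  have hBt : ∀ i : ℕ, i ≤ N → BB i = a + (M : ℤ) • e1 + (i : ℤ) • e2 := by
    intro i hi
    have hr : row i = ⟨i, by omega⟩ := Fin.ext (by simp only [hrowdef]; omega)
    simp only [hBBdef]
    rw [hr, hright ⟨i, by omega⟩]
  have hS0 : SS 0 = a + ((M : ℤ) - 1) • e1 := by
    have h0 : row 0 = 0 := Fin.ext (by simp [hrowdef])
    simp only [hSSdef]
    rw [h0, htop kl.castSucc, hklcs]
    have hc : ((M - 1 : ℕ) : ℤ) = (M : ℤ) - 1 := by omega
    rw [hc]
  have hSN : SS N = a + (M : ℤ) • e1 + ((N : ℤ) - 1) • e2 := by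
    have hNr : row N = Fin.last N := Fin.ext (by simp [hrowdef, Fin.val_last])
    simp only [hSSdef]
    rw [hNr, hbot kl.castSucc, hklcs, btmCount_pred N M x hN hM1 hxmono hxN]
    have h1 : ((N:ℤ) + ((M-1:ℕ):ℤ) - ((N-1:ℕ):ℤ)) = (M:ℤ) := by omega
    have h2 : ((N-1:ℕ):ℤ) = (N:ℤ)-1 := by omega
    rw [h1, h2]
  -- row product reduction
  have hrowred : ∀ (w : ℂ) (i : Fin N),
      (∏ k : Fin M, faceW q lam ω12 (s (i.castSucc, k.castSucc)) (s (i.castSucc, k.succ))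
        (s (i.succ, k.castSucc)) (s (i.succ, k.succ)) (u (N - (i : ℕ)))
        ((Function.update v M w) ((k : ℕ) + 1)))
      = faceW q lam ω12 (SS (i:ℕ)) (BB (i:ℕ)) (SS ((i:ℕ)+1)) (BB ((i:ℕ)+1)) (u (N - (i:ℕ))) w
        * ∏ k ∈ Finset.univ.erase kl, faceW q lam ω12 (s (i.castSucc, k.castSucc))
            (s (i.castSucc, k.succ)) (s (i.succ, k.castSucc)) (s (i.succ, k.succ))
            (u (N - (i : ℕ))) (v ((k : ℕ) + 1)) := by
    intro w i
    rw [← Finset.mul_prod_erase _ _ (Finset.mem_univ kl)]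
    congr 1
    · rw [hklval, Function.update_self]
      simp only [hSSdef, hBBdef]
      rw [hrowlt i, hrowssucc i, hklsucc]
    · apply Finset.prod_congr rfl
      intro k hk
      have hkne : (k : ℕ) + 1 ≠ M := by
        have h1 : k ≠ kl := (Finset.mem_erase.mp hk).1
        have h2 : (k : ℕ) ≠ M - 1 := fun h => h1 (Fin.ext (by simp [hkl, h]))
        have := k.isLt
        omega
      rw [Function.update_of_ne hkne]
  have hprodS : (∏ i : Fin N, ∏ k : Fin M,
        faceW q lam ω12 (s (i.castSucc, k.castSucc)) (s (i.castSucc, k.succ))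
          (s (i.succ, k.castSucc)) (s (i.succ, k.succ)) (u (N - (i : ℕ)))
          ((Function.update v M (v M + 2 * Complex.I * (Ktwo q : ℂ) / lam)) ((k : ℕ) + 1)))
      = (∏ i : Fin N, fwS (i : ℕ)) * ∏ i : Fin N, (∏ k ∈ Finset.univ.erase kl,
          faceW q lam ω12 (s (i.castSucc, k.castSucc)) (s (i.castSucc, k.succ))
            (s (i.succ, k.castSucc)) (s (i.succ, k.succ)) (u (N - (i : ℕ))) (v ((k : ℕ) + 1))) := by
    rw [← Finset.prod_mul_distrib]
    apply Finset.prod_congr rfl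
    intro i _
    rw [hrowred _ i]
  have hprod0 : (∏ i : Fin N, ∏ k : Fin M,
        faceW q lam ω12 (s (i.castSucc, k.castSucc)) (s (i.castSucc, k.succ))
          (s (i.succ, k.castSucc)) (s (i.succ, k.succ)) (u (N - (i : ℕ))) (v ((k : ℕ) + 1)))
      = (∏ i : Fin N, fw (i : ℕ)) * ∏ i : Fin N, (∏ k ∈ Finset.univ.erase kl,
          faceW q lam ω12 (s (i.castSucc, k.castSucc)) (s (i.castSucc, k.succ))
            (s (i.succ, k.castSucc)) (s (i.succ, k.succ)) (u (N - (i : ℕ))) (v ((k : ℕ) + 1))) := by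
    rw [← Finset.prod_mul_distrib]
    apply Finset.prod_congr rfl
    intro i _
    have h := hrowred (v M) i
    rw [Function.update_eq_self] at h
    rw [h]
  rw [hprodS, hprod0, Fin.prod_univ_eq_prod_range (fun i => fwS i) N,
    Fin.prod_univ_eq_prod_range (fun i => fw i) N]
  suffices hkey : ∏ i ∈ Finset.range N, fwS i
      = ((-(q:ℂ)⁻¹) ^ N * Complex.exp (-(Complex.I * (Real.pi:ℂ) * lam / (Kone q:ℂ)) *
          ((N:ℂ) * v M - (∑ j ∈ Finset.Icc 1 N, u j) + aSc ω12 a + (N:ℂ) + (M:ℂ) - 2)))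
        * ∏ i ∈ Finset.range N, fw i by
    rw [hkey]; ring
  by_cases hall : ∀ i, i < N →
      (BB i = SS i + e2 ∧ SS (i+1) = SS i + e2 ∧ BB (i+1) = SS i + e2 + e2)
      ∨ (BB i = SS i + e1 ∧ SS (i+1) = SS i + e2 ∧ BB (i+1) = SS i + e1 + e2)
      ∨ (BB i = SS i + e1 ∧ SS (i+1) = SS i + e1 ∧ BB (i+1) = SS i + e1 + e2)
  case neg =>
    obtain ⟨i0, hbad0⟩ := not_forall.mp hall
    obtain ⟨hi0, hbad⟩ := Classical.not_imp.mp hbad0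
    have hdB : BB (i0+1) = BB i0 + e2 := by
      rw [hBt (i0+1) (by omega), hBt i0 (by omega),
        show ((i0+1:ℕ):ℤ) = (i0:ℤ)+1 by push_cast; ring, add_smul, one_smul, ← add_assoc]
    have hz : fw i0 = 0 := by
      simp only [hfwdef]; exact faceW_qp2_zero ω12 _ _ _ _ hdB hbad _ _
    have hzS : fwS i0 = 0 := by
      simp only [hfwSdef]; exact faceW_qp2_zero ω12 _ _ _ _ hdB hbad _ _
    rw [Finset.prod_eq_zero (Finset.mem_range.mpr hi0) hzS,
      Finset.prod_eq_zero (Finset.mem_range.mpr hi0) hz]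
    ring
  case pos =>
    set r : ℕ → ℂ := fun i =>
      if BB i = SS i + e2 then 1 - (u (N - i) - v M)
      else if SS (i+1) = SS i + e1 then aSc ω12 (SS i) - (u (N - i) - v M)
      else -(u (N - i) - v M) with hrdef
    have hfac : ∀ i, i < N → fwS i = qpFac q lam (r i) * fw i := by
      intro i hi
      rcases hall i hi with ⟨hbb, hcc, hdd⟩ | ⟨hbb, hcc, hdd⟩ | ⟨hbb, hcc, hdd⟩
      · have hr : r i = 1 - (u (N - i) - v M) := by
          simp only [hrdef]; rw [if_pos hbb]
        rw [hr]
        simp only [hfwSdef, hfwdef]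
        exact faceW_qp2_br2 ω12 hq0 hq1 hK hlam _ _ _ _ hbb hcc hdd _ _
      · have hne2 : ¬ (BB i = SS i + e2) := by
          rw [hbb]; intro h; simp [e1, e2, Prod.ext_iff] at h
        have hne1 : ¬ (SS (i+1) = SS i + e1) := by
          rw [hcc]; intro h; simp [e1, e2, Prod.ext_iff] at h
        have hr : r i = -(u (N - i) - v M) := by
          simp only [hrdef]; rw [if_neg hne2, if_neg hne1]
        rw [hr]
        simp only [hfwSdef, hfwdef]
        exact faceW_qp2_br4 ω12 hq0 hq1 hK hlam _ _ _ _ hbb hcc hdd _ _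
      · have hne2 : ¬ (BB i = SS i + e2) := by
          rw [hbb]; intro h; simp [e1, e2, Prod.ext_iff] at h
        have hr : r i = aSc ω12 (SS i) - (u (N - i) - v M) := by
          simp only [hrdef]; rw [if_neg hne2, if_pos hcc]
        rw [hr]
        simp only [hfwSdef, hfwdef]
        exact faceW_qp2_br5 ω12 hq0 hq1 hK hlam _ _ _ _ hbb hcc hdd _ _
    have hprodr : ∏ i ∈ Finset.range N, fwS i
        = (∏ i ∈ Finset.range N, qpFac q lam (r i)) * ∏ i ∈ Finset.range N, fw i := by
      rw [← Finset.prod_mul_distrib]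
      exact Finset.prod_congr rfl (fun i hi => hfac i (Finset.mem_range.mp hi))
    -- sum of the r's by induction
    have hsum : ∀ n, n ≤ N → ∑ i ∈ Finset.range n, r i
        = (∑ i ∈ Finset.range n, (v M - u (N - i)))
          + (aSc ω12 a + (M:ℂ) - 2 + (n:ℂ)) * (((SS n).1 : ℂ) - ((a.1 : ℤ) : ℂ) - (M:ℂ) + 1) := by
      intro n
      induction n with
      | zero =>
        intro _
        have hfst : ((SS 0).1 : ℂ) = ((a.1 : ℤ) : ℂ) + (M:ℂ) - 1 := by
          rw [hS0]
          simp only [Prod.fst_add, Prod.smul_fst, smul_eq_mul, e1]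
          push_cast
          ring
        simp only [Finset.sum_range_zero, Nat.cast_zero]
        rw [hfst]; ring
      | succ n ih =>
        intro hn1
        have hnN : n < N := Nat.lt_of_succ_le hn1
        rw [Finset.sum_range_succ, Finset.sum_range_succ, ih (le_of_lt hnN)]
        have hb0 : BB n = a + (M:ℤ) • e1 + (n:ℤ) • e2 := hBt n (by omega)
        rcases hall n hnN with ⟨hbb, hcc, hdd⟩ | ⟨hbb, hcc, hdd⟩ | ⟨hbb, hcc, hdd⟩
        · -- branch 2 : χ_n = 1, χ_{n+1} = 1, r n = 1 - (u - t)
          have hr : r n = 1 - (u (N - n) - v M) := by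
            simp only [hrdef]; rw [if_pos hbb]
          have h2 := congrArg Prod.fst (hbb.symm.trans hb0)
          simp only [Prod.fst_add, Prod.smul_fst, smul_eq_mul, e1, e2] at h2
          have hfn : ((SS n).1 : ℂ) = ((a.1 : ℤ) : ℂ) + (M:ℂ) := by
            have hz : (SS n).1 = a.1 + (M:ℤ) := by omega
            rw [hz]; push_cast; ring
          have h3 := congrArg Prod.fst hcc
          simp only [Prod.fst_add, e2] at h3
          have hfn1 : ((SS (n+1)).1 : ℂ) = ((a.1 : ℤ) : ℂ) + (M:ℂ) := by
            have hz : (SS (n+1)).1 = a.1 + (M:ℤ) := by omega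
            rw [hz]; push_cast; ring
          rw [hr, hfn, hfn1]
          push_cast
          ring
        · -- branch 4 : χ_n = 0, χ_{n+1} = 0, r n = -(u - t)
          have hne2 : ¬ (BB n = SS n + e2) := by
            rw [hbb]; intro h; simp [e1, e2, Prod.ext_iff] at h
          have hne1 : ¬ (SS (n+1) = SS n + e1) := by
            rw [hcc]; intro h; simp [e1, e2, Prod.ext_iff] at h
          have hr : r n = -(u (N - n) - v M) := by
            simp only [hrdef]; rw [if_neg hne2, if_neg hne1]
          have h2 := congrArg Prod.fst (hbb.symm.trans hb0)
          simp only [Prod.fst_add, Prod.smul_fst, smul_eq_mul, e1, e2] at h2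
          have hfn : ((SS n).1 : ℂ) = ((a.1 : ℤ) : ℂ) + (M:ℂ) - 1 := by
            have hz : (SS n).1 = a.1 + (M:ℤ) - 1 := by omega
            rw [hz]; push_cast; ring
          have h3 := congrArg Prod.fst hcc
          simp only [Prod.fst_add, e2] at h3
          have hfn1 : ((SS (n+1)).1 : ℂ) = ((a.1 : ℤ) : ℂ) + (M:ℂ) - 1 := by
            have hz : (SS (n+1)).1 = a.1 + (M:ℤ) - 1 := by omega
            rw [hz]; push_cast; ring
          rw [hr, hfn, hfn1]
          push_cast
          ring
        · -- branch 5 : χ_n = 0, χ_{n+1} = 1, r n = aSc (SS n) - (u - t)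
          have hne2 : ¬ (BB n = SS n + e2) := by
            rw [hbb]; intro h; simp [e1, e2, Prod.ext_iff] at h
          have hr : r n = aSc ω12 (SS n) - (u (N - n) - v M) := by
            simp only [hrdef]; rw [if_neg hne2, if_pos hcc]
          have h2 := congrArg Prod.fst (hbb.symm.trans hb0)
          simp only [Prod.fst_add, Prod.smul_fst, smul_eq_mul, e1, e2] at h2
          have h2' := congrArg Prod.snd (hbb.symm.trans hb0)
          simp only [Prod.snd_add, Prod.smul_snd, smul_eq_mul, e1, e2] at h2'
          have h3 := congrArg Prod.fst hcc
          simp only [Prod.fst_add, e1] at h3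
          have hfn : ((SS n).1 : ℂ) = ((a.1 : ℤ) : ℂ) + (M:ℂ) - 1 := by
            have hz : (SS n).1 = a.1 + (M:ℤ) - 1 := by omega
            rw [hz]; push_cast; ring
          have hfn1 : ((SS (n+1)).1 : ℂ) = ((a.1 : ℤ) : ℂ) + (M:ℂ) := by
            have hz : (SS (n+1)).1 = a.1 + (M:ℤ) := by omega
            rw [hz]; push_cast; ring
          have hsn : ((SS n).2 : ℂ) = ((a.2 : ℤ) : ℂ) + (n:ℂ) := by
            have hz : (SS n).2 = a.2 + (n:ℤ) := by omega
            rw [hz]; push_cast; ring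
          have haS : aSc ω12 (SS n) = aSc ω12 a + (M:ℂ) - 2 + ((n:ℂ) + 1) := by
            unfold aSc
            rw [hfn, hsn]
            ring
          rw [hr, hfn, hfn1, haS]
          push_cast
          ring
    have hfstN : ((SS N).1 : ℂ) = ((a.1 : ℤ) : ℂ) + (M:ℂ) := by
      have h2 := congrArg Prod.fst hSN
      simp only [Prod.fst_add, Prod.smul_fst, smul_eq_mul, e1, e2] at h2
      have hz : (SS N).1 = a.1 + (M:ℤ) := by omega
      rw [hz]; push_cast; ring
    have hsumu : ∑ i ∈ Finset.range N, (v M - u (N - i))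
        = (N:ℂ) * v M - ∑ j ∈ Finset.Icc 1 N, u j := by
      rw [Finset.sum_sub_distrib, Finset.sum_const, Finset.card_range, nsmul_eq_mul]
      congr 1
      have h1 : ∑ i ∈ Finset.range N, u (N - i) = ∑ i ∈ Finset.range N, u (i + 1) := by
        rw [← Finset.sum_range_reflect (fun j => u (j + 1)) N]
        apply Finset.sum_congr rfl
        intro j hj
        have := Finset.mem_range.mp hj
        congr 1
        omega
      rw [h1]
      have h2 : ∀ m : ℕ, ∑ i ∈ Finset.range m, u (i + 1) = ∑ j ∈ Finset.Icc 1 m, u j := by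
        intro m
        induction m with
        | zero => simp
        | succ m ih =>
            rw [Finset.sum_range_succ, ih, ← Finset.insert_Icc_right_eq_Icc_add_one (by omega),
              Finset.sum_insert (by simp)]
            ring
      exact h2 N
    rw [hprodr, prod_qpFac, hsum N le_rfl, hfstN, hsumu]
    rw [show (((a.1 : ℤ) : ℂ) + (M:ℂ) - ((a.1 : ℤ) : ℂ) - (M:ℂ) + 1 : ℂ) = 1 by ring]
    rw [show ((N:ℂ) * v M - (∑ j ∈ Finset.Icc 1 N, u j))
        + (aSc ω12 a + (M:ℂ) - 2 + (N:ℂ)) * 1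
        = (N:ℂ) * v M - (∑ j ∈ Finset.Icc 1 N, u j) + aSc ω12 a + (N:ℂ) + (M:ℂ) - 2 by ring]

end pw2

lemma diff_finset_sum {ι : Type*} (f : ι → ℂ → ℂ) :
    ∀ (s : Finset ι), (∀ i ∈ s, Differentiable ℂ (f i)) →
      Differentiable ℂ (fun y => ∑ i ∈ s, f i y) := by
  intro s
  induction s using Finset.cons_induction with
  | empty =>
      intro _
      simp only [Finset.sum_empty]
      exact differentiable_const 0
  | cons a s ha ih =>
      intro hf
      simp only [Finset.sum_cons]
      exact (hf a (Finset.mem_cons_self a s)).add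
        (ih (fun i hi => hf i (Finset.mem_cons_of_mem hi)))

section diffpw
variable {q : ℝ} {lam : ℂ}

lemma differentiable_brak (hdt : Differentiable ℂ (theta q)) (lam : ℂ) :
    Differentiable ℂ (brak q lam) := by
  have h : brak q lam = fun u => theta q (lam * u) := rfl
  rw [h]
  exact hdt.comp (differentiable_id.const_mul lam)

lemma differentiable_faceW (hdt : Differentiable ℂ (theta q)) (ω12 : ℂ) (a b c d : ℤ×ℤ)
    (U : ℂ) : Differentiable ℂ (fun w => faceW q lam ω12 a b c d U w) := by
  have hb := differentiable_brak (q := q) hdt lam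
  unfold faceW
  split_ifs with h1 h2 h3 h4 h5 h6
  · exact (hb.comp (by fun_prop)).div_const _
  · exact (hb.comp (by fun_prop)).div_const _
  · exact ((hb.comp (by fun_prop)).mul_const _).div_const _
  · exact ((hb.comp (by fun_prop)).mul_const _).div_const _
  · exact (hb.comp (by fun_prop)).div_const _
  · exact (hb.comp (by fun_prop)).div_const _
  · exact differentiable_const 0

theorem differentiable_partW (hdt : Differentiable ℂ (theta q)) (ω12 : ℂ)
    (M N : ℕ) (u v : ℕ → ℂ) (x : ℕ → ℕ) (a : ℤ × ℤ) :
    Differentiable ℂ (fun y : ℂ =>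
      partW q lam ω12 M N u (Function.update v M (2 * (Kone q:ℂ) / lam * y)) x a) := by
  classical
  set Box : Finset (ℤ×ℤ) := Finset.Icc a (a + ((M+N : ℤ), (M+N : ℤ))) with hBox
  set S : Finset (Fin (N+1) × Fin (M+1) → ℤ×ℤ) := Fintype.piFinset (fun _ => Box) with hSdef
  have key : ∀ (w : ℕ → ℂ) (s : Fin (N + 1) × Fin (M + 1) → ℤ × ℤ),
      ((if (∀ k : Fin (M + 1), s (0, k) = a + ((k : ℕ) : ℤ) • e1) ∧
       (∀ i : Fin (N + 1), s (i, 0) = a + ((i : ℕ) : ℤ) • e1) ∧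
       (∀ i : Fin (N + 1), s (i, Fin.last M) = a + (M : ℤ) • e1 + ((i : ℕ) : ℤ) • e2) ∧
       (∀ k : Fin (M + 1), s (Fin.last N, k) =
          a + ((N : ℤ) + ((k : ℕ) : ℤ) - (btmCount N x (k : ℕ) : ℤ)) • e1 +
            (btmCount N x (k : ℕ) : ℤ) • e2)
      then
        ∏ i : Fin N, ∏ k : Fin M,
          faceW q lam ω12 (s (i.castSucc, k.castSucc)) (s (i.castSucc, k.succ))
            (s (i.succ, k.castSucc)) (s (i.succ, k.succ)) (u (N - (i : ℕ))) (w ((k : ℕ) + 1))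
      else 0) ≠ 0) → s ∈ S := by
    intro w s hne
    by_cases hcnd : (∀ k : Fin (M + 1), s (0, k) = a + ((k : ℕ) : ℤ) • e1) ∧
       (∀ i : Fin (N + 1), s (i, 0) = a + ((i : ℕ) : ℤ) • e1) ∧
       (∀ i : Fin (N + 1), s (i, Fin.last M) = a + (M : ℤ) • e1 + ((i : ℕ) : ℤ) • e2) ∧
       (∀ k : Fin (M + 1), s (Fin.last N, k) =
          a + ((N : ℤ) + ((k : ℕ) : ℤ) - (btmCount N x (k : ℕ) : ℤ)) • e1 +
            (btmCount N x (k : ℕ) : ℤ) • e2)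
    swap
    · rw [if_neg hcnd] at hne; exact absurd rfl hne
    rw [if_pos hcnd] at hne
    obtain ⟨htop, hleft, hright, hbot⟩ := hcnd
    have hfaces : ∀ (i : Fin N) (k : Fin M),
        faceW q lam ω12 (s (i.castSucc, k.castSucc)) (s (i.castSucc, k.succ))
          (s (i.succ, k.castSucc)) (s (i.succ, k.succ)) (u (N - (i : ℕ)))
          (w ((k : ℕ) + 1)) ≠ 0 := by
      intro i k h0
      apply hne
      apply Finset.prod_eq_zero (Finset.mem_univ i)
      exact Finset.prod_eq_zero (Finset.mem_univ k) h0
    have hbox : ∀ (i : Fin (N+1)) (k : Fin (M+1)),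
        a ≤ s (i,k) ∧ (s (i,k)).1 + (s (i,k)).2 = a.1 + a.2 + (i:ℕ) + (k:ℕ) := by
      intro i
      induction i using Fin.induction with
      | zero =>
        intro k
        rw [htop k]
        constructor
        · rw [Prod.le_def]
          constructor <;>
            simp [e1, Prod.fst_add, Prod.snd_add, Prod.smul_fst, Prod.smul_snd, smul_eq_mul]
        · simp [e1, Prod.fst_add, Prod.snd_add, Prod.smul_fst, Prod.smul_snd, smul_eq_mul]
          omega
      | succ i ih =>
        intro k
        by_cases hk : k = Fin.last M
        · subst hk
          rw [hright i.succ]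
          constructor
          · rw [Prod.le_def]
            constructor <;>
              simp [e1, e2, Prod.fst_add, Prod.snd_add, Prod.smul_fst, Prod.smul_snd,
                smul_eq_mul] <;> omega
          · simp [e1, e2, Prod.fst_add, Prod.snd_add, Prod.smul_fst, Prod.smul_snd,
              smul_eq_mul, Fin.val_succ, Fin.val_last]
            omega
        · have hklt : (k:ℕ) < M := Fin.val_lt_last hk
          have hf := hfaces i ⟨(k:ℕ), hklt⟩
          have hstep := faceW_branch_of_ne_zero ω12 _ _ _ _ _ _ hf
          have hcs : ((⟨(k:ℕ), hklt⟩ : Fin M).castSucc : Fin (M+1)) = k := Fin.ext rfl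
          rw [hcs] at hstep
          obtain ⟨hl, hs⟩ := ih k
          rcases hstep with h | h <;> rw [h] <;> constructor
          · refine le_trans hl ?_
            rw [Prod.le_def]
            constructor <;> simp [e1, Prod.fst_add, Prod.snd_add]
          · simp only [e1, Prod.fst_add, Prod.snd_add, Fin.val_succ, Fin.coe_castSucc] at hs ⊢
            omega
          · refine le_trans hl ?_
            rw [Prod.le_def]
            constructor <;> simp [e2, Prod.fst_add, Prod.snd_add]
          · simp only [e2, Prod.fst_add, Prod.snd_add, Fin.val_succ, Fin.coe_castSucc] at hs ⊢
            omega
    rw [hSdef, Fintype.mem_piFinset]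
    intro p
    obtain ⟨p1, p2⟩ := p
    obtain ⟨hlow, hsum⟩ := hbox p1 p2
    rw [hBox, Finset.mem_Icc]
    refine ⟨hlow, ?_⟩
    rw [Prod.le_def] at hlow ⊢
    obtain ⟨hl1, hl2⟩ := hlow
    have hp1 : (p1 : ℕ) ≤ N := Fin.is_le p1
    have hp2 : (p2 : ℕ) ≤ M := Fin.is_le p2
    constructor
    · simp only [Prod.fst_add]
      omega
    · simp only [Prod.snd_add]
      omega
  have hrepr : (fun y : ℂ =>
      partW q lam ω12 M N u (Function.update v M (2 * (Kone q:ℂ) / lam * y)) x a)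
      = fun y => ∑ s ∈ S,
        (if (∀ k : Fin (M + 1), s (0, k) = a + ((k : ℕ) : ℤ) • e1) ∧
       (∀ i : Fin (N + 1), s (i, 0) = a + ((i : ℕ) : ℤ) • e1) ∧
       (∀ i : Fin (N + 1), s (i, Fin.last M) = a + (M : ℤ) • e1 + ((i : ℕ) : ℤ) • e2) ∧
       (∀ k : Fin (M + 1), s (Fin.last N, k) =
          a + ((N : ℤ) + ((k : ℕ) : ℤ) - (btmCount N x (k : ℕ) : ℤ)) • e1 +
            (btmCount N x (k : ℕ) : ℤ) • e2)
      then
        ∏ i : Fin N, ∏ k : Fin M,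
          faceW q lam ω12 (s (i.castSucc, k.castSucc)) (s (i.castSucc, k.succ))
            (s (i.succ, k.castSucc)) (s (i.succ, k.succ)) (u (N - (i : ℕ)))
            ((Function.update v M (2 * (Kone q:ℂ) / lam * y)) ((k : ℕ) + 1))
      else 0) := by
    funext y
    unfold partW
    exact tsum_eq_sum (fun s hs => by
      by_contra h0
      exact hs (key _ s h0))
  rw [hrepr]
  apply diff_finset_sum _ S
  intro s _
  by_cases hcnd : (∀ k : Fin (M + 1), s (0, k) = a + ((k : ℕ) : ℤ) • e1) ∧
       (∀ i : Fin (N + 1), s (i, 0) = a + ((i : ℕ) : ℤ) • e1) ∧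
       (∀ i : Fin (N + 1), s (i, Fin.last M) = a + (M : ℤ) • e1 + ((i : ℕ) : ℤ) • e2) ∧
       (∀ k : Fin (M + 1), s (Fin.last N, k) =
          a + ((N : ℤ) + ((k : ℕ) : ℤ) - (btmCount N x (k : ℕ) : ℤ)) • e1 +
            (btmCount N x (k : ℕ) : ℤ) • e2)
  · simp only [if_pos hcnd]
    apply diff_finset_prod
    intro i _
    apply diff_finset_prod
    intro k _
    by_cases hk : (k : ℕ) + 1 = M
    · have hupd : ∀ y : ℂ, (Function.update v M (2 * (Kone q:ℂ) / lam * y)) ((k : ℕ) + 1)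
          = 2 * (Kone q:ℂ) / lam * y := by
        intro y
        rw [hk, Function.update_self]
      simp only [hupd]
      exact (differentiable_faceW hdt ω12 _ _ _ _ _).comp (differentiable_id.const_mul _)
    · have hupd : ∀ y : ℂ, (Function.update v M (2 * (Kone q:ℂ) / lam * y)) ((k : ℕ) + 1)
          = v ((k : ℕ) + 1) := by
        intro y
        rw [Function.update_of_ne hk]
      simp only [hupd]
      exact differentiable_const _
  · simp only [if_neg hcnd]
    exact differentiable_const 0

end diffpw


/-- if `x_N = M`, the partition function `W_{M,N}`, regarded as a function of
`v_M`, satisfies the two quasi-periodicities, and consequently, as a function of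
`y_M = (λ/(2K₁)) v_M` it is an elliptic polynomial in `Θ_N(χ)` with `τ = iK₂/K₁`,
`χ(1) = (-1)^N` and `χ(τ) = (-1)^N exp((πλτ/K₂)(Σ u_j - a₁₂ - N - M + 2))`. -/
theorem statement5 (q : ℝ) (hq0 : 0 < q) (hq1 : q < 1) (lam : ℂ) (hlam : lam ≠ 0)
    (ω12 : ℂ) (M N : ℕ) (hN : 1 ≤ N) (hNM : N ≤ M)
    (u v : ℕ → ℂ) (x : ℕ → ℕ)
    (hx1 : 1 ≤ x 1) (hxmono : ∀ j k, 1 ≤ j → j < k → k ≤ N → x j < x k)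
    (hxN : x N = M) (a : ℤ × ℤ)
    (hbr1 : brak q lam 1 ≠ 0)
    (hbrA : ∀ b : ℤ × ℤ, brak q lam (aSc ω12 b) ≠ 0)
    (hbrA' : ∀ b : ℤ × ℤ, brak q lam (-aSc ω12 b) ≠ 0)
    (φ : ℂ → ℂ)
    (hφ : ∀ y : ℂ, φ y =
      partW q lam ω12 M N u (Function.update v M (2 * (Kone q : ℂ) / lam * y)) x a) :
    partW q lam ω12 M N u (Function.update v M (v M + 2 * (Kone q : ℂ) / lam)) x a =
      (-1 : ℂ) ^ N * partW q lam ω12 M N u v x a ∧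
    partW q lam ω12 M N u (Function.update v M (v M + 2 * Complex.I * (Ktwo q : ℂ) / lam)) x a =
      (-(q : ℂ)⁻¹) ^ N *
        Complex.exp (-(Complex.I * (Real.pi : ℂ) * lam / (Kone q : ℂ)) *
          ((N : ℂ) * v M - (∑ j ∈ Finset.Icc 1 N, u j) + aSc ω12 a + (N : ℂ) + (M : ℂ) - 2)) *
        partW q lam ω12 M N u v x a ∧
    Differentiable ℂ φ ∧
    (∀ y : ℂ, φ (y + 1) = (-1 : ℂ) ^ N * φ y) ∧
    (∀ y : ℂ, φ (y + Complex.I * (Ktwo q : ℂ) / (Kone q : ℂ)) =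
      ((-1 : ℂ) ^ N *
        Complex.exp (((Real.pi : ℂ) * lam * (Complex.I * (Ktwo q : ℂ) / (Kone q : ℂ)) / (Ktwo q : ℂ)) *
          ((∑ j ∈ Finset.Icc 1 N, u j) - aSc ω12 a - (N : ℂ) - (M : ℂ) + 2))) *
        Complex.exp (-2 * (Real.pi : ℂ) * Complex.I * (N : ℂ) * y -
          (Real.pi : ℂ) * Complex.I * (N : ℂ) * (Complex.I * (Ktwo q : ℂ) / (Kone q : ℂ))) *
        φ y) := by
  have hK : Kone q ≠ 0 := Kone_ne_zero_of_brak hbr1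
  have hKc : ((Kone q : ℝ) : ℂ) ≠ 0 := by exact_mod_cast hK
  have hK2 : Ktwo q ≠ 0 := Ktwo_ne_zero hq0 hq1 hK
  have hK2c : ((Ktwo q : ℝ) : ℂ) ≠ 0 := by exact_mod_cast hK2
  have hdt : Differentiable ℂ (theta q) := differentiable_theta q hq0 hq1
  have hL : Complex.exp ((Real.log q : ℝ) : ℂ) = (q : ℂ) := by
    rw [← Complex.ofReal_exp, Real.exp_log hq0]
  have hKL : (Real.pi : ℂ) * ((Ktwo q : ℝ) : ℂ) / (Kone q : ℂ) = -((Real.log q : ℝ) : ℂ) := by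
    have hr : Real.pi * Ktwo q / Kone q = -Real.log q := by
      rw [Ktwo]; field_simp
    have h2 := congrArg (fun t : ℝ => (t : ℂ)) hr
    push_cast at h2
    exact_mod_cast h2
  refine ⟨partW_qp1 hq0 hq1 hlam hK ω12 M N hN hNM u x a v,
    partW_qp2 hq0 hq1 hlam hK ω12 M N hN hNM u x hxmono hxN a v, ?_, ?_, ?_⟩
  · have h := differentiable_partW (q := q) (lam := lam) hdt ω12 M N u v x a
    have hφeq : φ = fun y =>
        partW q lam ω12 M N u (Function.update v M (2 * (Kone q : ℂ) / lam * y)) x a := by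
      funext y; exact hφ y
    rw [hφeq]; exact h
  · intro y
    rw [hφ y, hφ (y + 1)]
    have harg : Function.update v M (2 * (Kone q : ℂ) / lam * (y + 1))
        = Function.update (Function.update v M (2 * (Kone q : ℂ) / lam * y)) M
            ((Function.update v M (2 * (Kone q : ℂ) / lam * y)) M + 2 * (Kone q : ℂ) / lam) := by
      rw [Function.update_idem]
      congr 1
      rw [Function.update_self]
      ring
    rw [harg, partW_qp1 hq0 hq1 hlam hK ω12 M N hN hNM u x a]
  · intro y
    rw [hφ y, hφ (y + Complex.I * (Ktwo q : ℂ) / (Kone q : ℂ))]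
    have harg : Function.update v M
          (2 * (Kone q : ℂ) / lam * (y + Complex.I * (Ktwo q : ℂ) / (Kone q : ℂ)))
        = Function.update (Function.update v M (2 * (Kone q : ℂ) / lam * y)) M
            ((Function.update v M (2 * (Kone q : ℂ) / lam * y)) M
              + 2 * Complex.I * (Ktwo q : ℂ) / lam) := by
      have hval : 2 * (Kone q : ℂ) / lam * (y + Complex.I * (Ktwo q : ℂ) / (Kone q : ℂ))
          = 2 * (Kone q : ℂ) / lam * y + 2 * Complex.I * (Ktwo q : ℂ) / lam := by
        field_simp
      rw [Function.update_idem, Function.update_self, hval]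
    rw [harg, partW_qp2 hq0 hq1 hlam hK ω12 M N hN hNM u x hxmono hxN a]
    rw [show (Function.update v M (2 * (Kone q : ℂ) / lam * y)) M
        = 2 * (Kone q : ℂ) / lam * y from Function.update_self _ _ _]
    -- scalar identity
    have hsc : (-(q:ℂ)⁻¹) ^ N *
        Complex.exp (-(Complex.I * (Real.pi : ℂ) * lam / (Kone q : ℂ)) *
          ((N : ℂ) * (2 * (Kone q : ℂ) / lam * y) - (∑ j ∈ Finset.Icc 1 N, u j) + aSc ω12 a
            + (N : ℂ) + (M : ℂ) - 2))
        = ((-1 : ℂ) ^ N *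
            Complex.exp (((Real.pi : ℂ) * lam * (Complex.I * (Ktwo q : ℂ) / (Kone q : ℂ))
                / (Ktwo q : ℂ)) *
              ((∑ j ∈ Finset.Icc 1 N, u j) - aSc ω12 a - (N : ℂ) - (M : ℂ) + 2))) *
          Complex.exp (-2 * (Real.pi : ℂ) * Complex.I * (N : ℂ) * y -
            (Real.pi : ℂ) * Complex.I * (N : ℂ) *
              (Complex.I * (Ktwo q : ℂ) / (Kone q : ℂ))) := by
      have hcoe : ((Real.pi : ℂ) * lam * (Complex.I * (Ktwo q : ℂ) / (Kone q : ℂ))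
          / (Ktwo q : ℂ)) = Complex.I * (Real.pi : ℂ) * lam / (Kone q : ℂ) := by
        field_simp
      have hEL : -(Complex.I * (Real.pi : ℂ) * lam / (Kone q : ℂ)) *
          ((N : ℂ) * (2 * (Kone q : ℂ) / lam * y) - (∑ j ∈ Finset.Icc 1 N, u j) + aSc ω12 a
            + (N : ℂ) + (M : ℂ) - 2)
          = (Complex.I * (Real.pi : ℂ) * lam / (Kone q : ℂ)) *
              ((∑ j ∈ Finset.Icc 1 N, u j) - aSc ω12 a - (N : ℂ) - (M : ℂ) + 2)
            + (-2 * (Real.pi : ℂ) * Complex.I * (N : ℂ) * y) := by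
        field_simp
        ring
      have hE2 : -2 * (Real.pi : ℂ) * Complex.I * (N : ℂ) * y -
            (Real.pi : ℂ) * Complex.I * (N : ℂ) * (Complex.I * (Ktwo q : ℂ) / (Kone q : ℂ))
          = (-2 * (Real.pi : ℂ) * Complex.I * (N : ℂ) * y)
            + (-((N : ℂ) * ((Real.log q : ℝ) : ℂ))) := by
        have h1 : (Real.pi : ℂ) * Complex.I * (N : ℂ) * (Complex.I * (Ktwo q : ℂ) / (Kone q : ℂ))
            = (Complex.I * Complex.I) * ((N : ℂ) *
                ((Real.pi : ℂ) * ((Ktwo q : ℝ) : ℂ) / (Kone q : ℂ))) := by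
          ring
        rw [h1, Complex.I_mul_I, hKL]
        ring
      rw [hcoe, hEL, hE2, Complex.exp_add, Complex.exp_add]
      have hqN : Complex.exp ((N : ℂ) * ((Real.log q : ℝ) : ℂ)) = (q : ℂ) ^ N := by
        rw [← hL, ← Complex.exp_nat_mul]
      rw [Complex.exp_neg, hqN]
      have hq0c : (q : ℂ) ≠ 0 := by exact_mod_cast hq0.ne'
      rw [show (-(q:ℂ)⁻¹) ^ N = (-1 : ℂ)^N * ((q:ℂ)^N)⁻¹ by
        rw [show -(q:ℂ)⁻¹ = (-1 : ℂ) * (q:ℂ)⁻¹ by ring, mul_pow, inv_pow]]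
      field_simp
    linear_combination (partW q lam ω12 M N u
      (Function.update v M (2 * (Kone q : ℂ) / lam * y)) x a) * hsc

end
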